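/- Let K be an algebraically closed field of characteristic p > 2 and m, n ≥ 1. The algebra A_s(m|n) of supersymmetric polynomials contains the subalgebra B' = K[σ_1(x)^p,…,σ_m(x)^p, σ_1(y)^p,…,σ_n(y)^p] and is a finitely generated B'-module. -/

import Mathlib

open MvPolynomial

noncomputable section

/-- The substitution `x_m = y_n = T`, landing in polynomials in `T` over the original ring
(the image only involves the remaining variables). -/
def psiSub (K : Type*) [CommSemiring K] (m n : ℕ) :
    MvPolynomial (Fin m ⊕ Fin n) K →ₐ[K] Polynomial (MvPolynomial (Fin m ⊕ Fin n) K) :=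
  MvPolynomial.aeval (Sum.elim
    (fun i : Fin m => if (i : ℕ) = m - 1 then Polynomial.X
      else Polynomial.C (MvPolynomial.X (Sum.inl i)))
    (fun j : Fin n => if (j : ℕ) = n - 1 then Polynomial.X
      else Polynomial.C (MvPolynomial.X (Sum.inr j))))

/-- `f` is supersymmetric: symmetric in the `x` and `y` variables separately, and
`(d/dT) f|_{x_m = y_n = T} = 0`. -/
def IsSupersymmetric (K : Type*) [CommSemiring K] (m n : ℕ)
    (f : MvPolynomial (Fin m ⊕ Fin n) K) : Prop :=
  (∀ σ : Equiv.Perm (Fin m), MvPolynomial.rename (Sum.map σ id) f = f) ∧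
  (∀ τ : Equiv.Perm (Fin n), MvPolynomial.rename (Sum.map id τ) f = f) ∧
  Polynomial.derivative (psiSub K m n f) = 0

/-- `c_r(x|y) = Σ_{i=0}^{min(r,m)} (−1)^{r−i} σ_i(x) h_{r−i}(y)`. -/
def cpoly (K : Type*) [CommRing K] (m n r : ℕ) : MvPolynomial (Fin m ⊕ Fin n) K :=
  ∑ i ∈ Finset.range (min r m + 1),
    (-1 : MvPolynomial (Fin m ⊕ Fin n) K) ^ (r - i) *
      (MvPolynomial.rename Sum.inl (MvPolynomial.esymm (Fin m) K i)) *
      (MvPolynomial.rename Sum.inr (MvPolynomial.hsymm (Fin n) K (r - i)))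

/-- σ_i(x_1,…,x_m), viewed in K[x_1,…,x_m,y_1,…,y_n]. -/
def sigmaX (K : Type*) [CommSemiring K] (m n i : ℕ) : MvPolynomial (Fin m ⊕ Fin n) K :=
  MvPolynomial.rename Sum.inl (MvPolynomial.esymm (Fin m) K i)

/-- σ_j(y_1,…,y_n), viewed in K[x_1,…,x_m,y_1,…,y_n]. -/
def sigmaY (K : Type*) [CommSemiring K] (m n j : ℕ) : MvPolynomial (Fin m ⊕ Fin n) K :=
  MvPolynomial.rename Sum.inr (MvPolynomial.esymm (Fin n) K j)

/-- The generators of the algebra `A_ns(m|n)` of nice supersymmetric polynomials: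
`c_r` (r ≥ 0), `σ_i(x)^p` (1 ≤ i ≤ m), `σ_j(y)^p` (1 ≤ j ≤ n) and
`u_k = σ_m(x)^k σ_n(y)^{p-k}` (0 < k < p). -/
def nsGens (K : Type*) [CommRing K] (p m n : ℕ) : Set (MvPolynomial (Fin m ⊕ Fin n) K) :=
  {f | ∃ r : ℕ, f = cpoly K m n r} ∪
  {f | ∃ i : ℕ, 1 ≤ i ∧ i ≤ m ∧ f = (sigmaX K m n i) ^ p} ∪
  {f | ∃ j : ℕ, 1 ≤ j ∧ j ≤ n ∧ f = (sigmaY K m n j) ^ p} ∪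
  {f | ∃ k : ℕ, 0 < k ∧ k < p ∧ f = (sigmaX K m n m) ^ k * (sigmaY K m n n) ^ (p - k)}

/-- The evaluation morphism `p_e` sending `x_i ↦ x_i` (i ≤ m), `y_j ↦ y_j` (j ≤ n) and the
remaining variables to `0`. -/
def pe (K : Type*) [CommSemiring K] (M N m n : ℕ) :
    MvPolynomial (Fin M ⊕ Fin N) K →ₐ[K] MvPolynomial (Fin m ⊕ Fin n) K :=
  MvPolynomial.aeval (Sum.elim
    (fun i : Fin M => if h : (i : ℕ) < m then MvPolynomial.X (Sum.inl ⟨(i : ℕ), h⟩) else 0)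
    (fun j : Fin N => if h : (j : ℕ) < n then MvPolynomial.X (Sum.inr ⟨(j : ℕ), h⟩) else 0))

end

noncomputable section

/-- If all the `p`-th powers of the elementary symmetric functions of a finite family `g`
belong to a subalgebra `S` (where `p` is the characteristic), then each `g i` is
integral over `S`. -/
lemma aux_isIntegral {K R : Type*} [CommRing K] [CommRing R] [Algebra K R] [Nontrivial R]
    {p : ℕ} (hp : p.Prime) [CharP R p] (S : Subalgebra K R) {ι : Type*} [Fintype ι]
    (g : ι → R)
    (hS : ∀ r : ℕ, (∑ t ∈ Finset.powersetCard r Finset.univ, ∏ i ∈ t, g i) ^ p ∈ S)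
    (i : ι) : IsIntegral (↥S) (g i) := by
  haveI : Fact p.Prime := ⟨hp⟩
  haveI : ExpChar R p := ExpChar.prime hp
  set Q : Polynomial R := ∏ j : ι, (Polynomial.X - Polynomial.C (g j)) with hQ
  have hQm : Q.Monic :=
    Polynomial.monic_prod_of_monic _ _ fun j _ => Polynomial.monic_X_sub_C _
  have hQdeg : Q.natDegree = Fintype.card ι := by
    rw [hQ, Polynomial.natDegree_prod_of_monic _ _ fun j _ => Polynomial.monic_X_sub_C _]
    simp
  have hQc : ∀ k : ℕ, (Q.coeff k) ^ p ∈ S := by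
    intro k
    by_cases hk : k ≤ Fintype.card ι
    · have hmul : Q = ((Finset.univ.val.map g).map fun t =>
          Polynomial.X - Polynomial.C t).prod := by
        rw [hQ, Finset.prod_eq_multiset_prod, Multiset.map_map]
        rfl
      have hcard : Multiset.card (Finset.univ.val.map g) = Fintype.card ι := by simp
      have hco := Multiset.prod_X_sub_C_coeff (Finset.univ.val.map g)
        (k := k) (by rw [hcard]; exact hk)
      rw [← hmul, hcard] at hco
      rw [hco, Finset.esymm_map_val, mul_pow]
      exact S.mul_mem (S.pow_mem (S.pow_mem (S.neg_mem S.one_mem) _) _) (hS _)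
    · have h0 : Q.coeff k = 0 :=
        Polynomial.coeff_eq_zero_of_natDegree_lt (by rw [hQdeg]; omega)
      rw [h0, zero_pow hp.ne_zero]
      exact S.zero_mem
  have hcoe : ∀ k : ℕ, (Q ^ p).coeff k ∈ S := by
    intro k
    have h1 : (Q ^ p).coeff k = ((Polynomial.expand R p Q).coeff k) ^ p := by
      rw [← Polynomial.map_frobenius_expand p Q, Polynomial.coeff_map, frobenius_def]
    rw [h1, Polynomial.coeff_expand hp.pos]
    split_ifs with h
    · exact hQc _
    · rw [zero_pow hp.ne_zero]; exact S.zero_mem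
  have hlift : Q ^ p ∈ Polynomial.lifts (algebraMap (↥S) R) := by
    rw [Polynomial.lifts_iff_coeff_lifts]
    intro k
    exact ⟨⟨(Q ^ p).coeff k, hcoe k⟩, rfl⟩
  obtain ⟨q, hq, _, hqm⟩ := Polynomial.lifts_and_degree_eq_and_monic hlift (hQm.pow p)
  refine ⟨q, hqm, ?_⟩
  rw [Polynomial.eval₂_eq_eval_map, hq, Polynomial.eval_pow, hQ, Polynomial.eval_prod,
    Finset.prod_eq_zero (Finset.mem_univ i) (by simp), zero_pow hp.ne_zero]

set_option maxHeartbeats 1000000 in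
/-- `A_s(m|n)` contains `B' = K[σ_1(x)^p,…,σ_m(x)^p,σ_1(y)^p,…,σ_n(y)^p]` and is a finitely
generated `B'`-module. -/
theorem As_finite_module_over_Bprime (K : Type*) [Field K] [IsAlgClosed K]
    (p : ℕ) [CharP K p] (hp : 2 < p) (m n : ℕ) (hm : 1 ≤ m) (hn : 1 ≤ n) :
    ∀ Bprime : Subalgebra K (MvPolynomial (Fin m ⊕ Fin n) K),
      Bprime = Algebra.adjoin K
          ({f | ∃ i : ℕ, 1 ≤ i ∧ i ≤ m ∧ f = (sigmaX K m n i) ^ p} ∪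
            {f | ∃ j : ℕ, 1 ≤ j ∧ j ≤ n ∧ f = (sigmaY K m n j) ^ p}) →
      (∀ f ∈ Bprime, IsSupersymmetric K m n f) ∧
      ∃ S : Finset (MvPolynomial (Fin m ⊕ Fin n) K),
        (∀ g ∈ S, IsSupersymmetric K m n g) ∧
        ∀ f : MvPolynomial (Fin m ⊕ Fin n) K, IsSupersymmetric K m n f →
          f ∈ Submodule.span Bprime (S : Set (MvPolynomial (Fin m ⊕ Fin n) K)) := by
  intro Bprime hB
  have hp0 : p ≠ 0 := by omega
  have hpp : p.Prime := (CharP.char_is_prime_or_zero K p).resolve_right hp0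
  -- closure properties of supersymmetric polynomials
  have hadd : ∀ f g, IsSupersymmetric K m n f → IsSupersymmetric K m n g →
      IsSupersymmetric K m n (f + g) := by
    rintro f g ⟨hf1, hf2, hf3⟩ ⟨hg1, hg2, hg3⟩
    refine ⟨fun σ => by rw [map_add, hf1, hg1], fun τ => by rw [map_add, hf2, hg2], ?_⟩
    rw [map_add, map_add, hf3, hg3, add_zero]
  have hmul : ∀ f g, IsSupersymmetric K m n f → IsSupersymmetric K m n g →
      IsSupersymmetric K m n (f * g) := by
    rintro f g ⟨hf1, hf2, hf3⟩ ⟨hg1, hg2, hg3⟩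
    refine ⟨fun σ => by rw [map_mul, hf1, hg1], fun τ => by rw [map_mul, hf2, hg2], ?_⟩
    rw [map_mul, Polynomial.derivative_mul, hf3, hg3, mul_zero, zero_mul, add_zero]
  have halg : ∀ c : K,
      IsSupersymmetric K m n (algebraMap K (MvPolynomial (Fin m ⊕ Fin n) K) c) := by
    intro c
    refine ⟨fun σ => AlgHom.commutes _ c, fun τ => AlgHom.commutes _ c, ?_⟩
    rw [AlgHom.commutes, Polynomial.algebraMap_apply, Polynomial.derivative_C]
  -- the generators of B' are supersymmetric
  have hgen : ∀ f ∈ ({f | ∃ i : ℕ, 1 ≤ i ∧ i ≤ m ∧ f = (sigmaX K m n i) ^ p} ∪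
      {f | ∃ j : ℕ, 1 ≤ j ∧ j ≤ n ∧ f = (sigmaY K m n j) ^ p} :
        Set (MvPolynomial (Fin m ⊕ Fin n) K)), IsSupersymmetric K m n f := by
    rintro f (⟨i, hi1, hi2, rfl⟩ | ⟨j, hj1, hj2, rfl⟩)
    · refine ⟨fun σ => ?_, fun τ => ?_, ?_⟩
      · rw [map_pow]
        congr 1
        rw [sigmaX, rename_rename]
        have hcomp : Sum.map (⇑σ) (id : Fin n → Fin n) ∘ Sum.inl = Sum.inl ∘ ⇑σ := by
          funext a; simp
        rw [hcomp, ← rename_rename, esymm_isSymmetric (Fin m) K i σ]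
      · rw [map_pow]
        congr 1
        rw [sigmaX, rename_rename]
        have hcomp : Sum.map (id : Fin m → Fin m) (⇑τ) ∘ Sum.inl = Sum.inl := by
          funext a; simp
        rw [hcomp]
      · rw [map_pow, Polynomial.derivative_pow,
          CharP.cast_eq_zero (MvPolynomial (Fin m ⊕ Fin n) K) p, map_zero, zero_mul, zero_mul]
    · refine ⟨fun σ => ?_, fun τ => ?_, ?_⟩
      · rw [map_pow]
        congr 1
        rw [sigmaY, rename_rename]
        have hcomp : Sum.map (⇑σ) (id : Fin n → Fin n) ∘ Sum.inr = Sum.inr := by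
          funext a; simp
        rw [hcomp]
      · rw [map_pow]
        congr 1
        rw [sigmaY, rename_rename]
        have hcomp : Sum.map (id : Fin m → Fin m) (⇑τ) ∘ Sum.inr = Sum.inr ∘ ⇑τ := by
          funext a; simp
        rw [hcomp, ← rename_rename, esymm_isSymmetric (Fin n) K j τ]
      · rw [map_pow, Polynomial.derivative_pow,
          CharP.cast_eq_zero (MvPolynomial (Fin m ⊕ Fin n) K) p, map_zero, zero_mul, zero_mul]
  have hBle : ∀ f ∈ Bprime, IsSupersymmetric K m n f := by
    intro f hf
    rw [hB] at hf
    have : Algebra.adjoin K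
        ({f | ∃ i : ℕ, 1 ≤ i ∧ i ≤ m ∧ f = (sigmaX K m n i) ^ p} ∪
          {f | ∃ j : ℕ, 1 ≤ j ∧ j ≤ n ∧ f = (sigmaY K m n j) ^ p}) ≤
        ({ carrier := {f | IsSupersymmetric K m n f}
           mul_mem' := fun hf hg => hmul _ _ hf hg
           add_mem' := fun hf hg => hadd _ _ hf hg
           algebraMap_mem' := halg } : Subalgebra K (MvPolynomial (Fin m ⊕ Fin n) K)) :=
      Algebra.adjoin_le hgen
    exact this hf
  refine ⟨hBle, ?_⟩
  -- the supersymmetric polynomials as a B'-submodule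
  let A_mod : Submodule (↥Bprime) (MvPolynomial (Fin m ⊕ Fin n) K) :=
  { carrier := {f | IsSupersymmetric K m n f}
    add_mem' := fun hf hg => hadd _ _ hf hg
    zero_mem' := by simpa using halg 0
    smul_mem' := fun c f hf => by
      have h1 : (c : MvPolynomial (Fin m ⊕ Fin n) K) • f
          = (c : MvPolynomial (Fin m ⊕ Fin n) K) * f := rfl
      show IsSupersymmetric K m n (c • f)
      rw [Algebra.smul_def]
      exact hmul _ _ (hBle _ c.2) hf }
  -- each variable is integral over B'
  have hint : ∀ k : Fin m ⊕ Fin n, IsIntegral (↥Bprime) (MvPolynomial.X k :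
      MvPolynomial (Fin m ⊕ Fin n) K) := by
    intro k
    have hsigX : ∀ r : ℕ, (∑ t ∈ Finset.powersetCard r Finset.univ, ∏ i ∈ t,
        (MvPolynomial.X (Sum.inl i) : MvPolynomial (Fin m ⊕ Fin n) K)) = sigmaX K m n r := by
      intro r
      simp only [sigmaX, MvPolynomial.esymm, map_sum, map_prod, rename_X]
    have hsigY : ∀ r : ℕ, (∑ t ∈ Finset.powersetCard r Finset.univ, ∏ i ∈ t,
        (MvPolynomial.X (Sum.inr i) : MvPolynomial (Fin m ⊕ Fin n) K)) = sigmaY K m n r := by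
      intro r
      simp only [sigmaY, MvPolynomial.esymm, map_sum, map_prod, rename_X]
    have hmemX : ∀ r : ℕ, (sigmaX K m n r) ^ p ∈ Bprime := by
      intro r
      rcases Nat.eq_zero_or_pos r with rfl | hr
      · have h1 : sigmaX K m n 0 = 1 := by
          simp [sigmaX, esymm_zero]
        rw [h1, one_pow]; exact Bprime.one_mem
      rcases le_or_gt r m with hrm | hrm
      · rw [hB]; exact Algebra.subset_adjoin (Or.inl ⟨r, hr, hrm, rfl⟩)
      · have h1 : sigmaX K m n r = 0 := by
          rw [sigmaX, MvPolynomial.esymm,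
            Finset.powersetCard_eq_empty.2 (by simpa using hrm), Finset.sum_empty, map_zero]
        rw [h1, zero_pow hp0]; exact Bprime.zero_mem
    have hmemY : ∀ r : ℕ, (sigmaY K m n r) ^ p ∈ Bprime := by
      intro r
      rcases Nat.eq_zero_or_pos r with rfl | hr
      · have h1 : sigmaY K m n 0 = 1 := by
          simp [sigmaY, esymm_zero]
        rw [h1, one_pow]; exact Bprime.one_mem
      rcases le_or_gt r n with hrn | hrn
      · rw [hB]; exact Algebra.subset_adjoin (Or.inr ⟨r, hr, hrn, rfl⟩)
      · have h1 : sigmaY K m n r = 0 := by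
          rw [sigmaY, MvPolynomial.esymm,
            Finset.powersetCard_eq_empty.2 (by simpa using hrn), Finset.sum_empty, map_zero]
        rw [h1, zero_pow hp0]; exact Bprime.zero_mem
    rcases k with i | j
    · exact aux_isIntegral hpp Bprime (fun i : Fin m => MvPolynomial.X (Sum.inl i))
        (fun r => by rw [hsigX r]; exact hmemX r) i
    · exact aux_isIntegral hpp Bprime (fun j : Fin n => MvPolynomial.X (Sum.inr j))
        (fun r => by rw [hsigY r]; exact hmemY r) j
  -- the polynomial ring is integral over B'
  haveI hRint : Algebra.IsIntegral (↥Bprime) (MvPolynomial (Fin m ⊕ Fin n) K) := by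
    rw [Algebra.isIntegral_def]
    intro x
    have htop : x ∈ Algebra.adjoin (↥Bprime)
        (Set.range (MvPolynomial.X : _ → MvPolynomial (Fin m ⊕ Fin n) K)) := by
      have hy : x ∈ Algebra.adjoin K
          (Set.range (MvPolynomial.X : _ → MvPolynomial (Fin m ⊕ Fin n) K)) := by
        rw [MvPolynomial.adjoin_range_X]; trivial
      have hle : Algebra.adjoin K
          (Set.range (MvPolynomial.X : _ → MvPolynomial (Fin m ⊕ Fin n) K)) ≤
          (Algebra.adjoin (↥Bprime)
            (Set.range (MvPolynomial.X : _ → MvPolynomial (Fin m ⊕ Fin n) K))).restrictScalars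
            K :=
        Algebra.adjoin_le fun z hz => Algebra.subset_adjoin hz
      exact hle hy
    have hcl : Algebra.adjoin (↥Bprime)
        (Set.range (MvPolynomial.X : _ → MvPolynomial (Fin m ⊕ Fin n) K)) ≤
        integralClosure (↥Bprime) (MvPolynomial (Fin m ⊕ Fin n) K) := by
      apply Algebra.adjoin_le
      rintro z ⟨k, rfl⟩
      exact hint k
    exact (mem_integralClosure_iff _ _).1 (hcl htop)
  haveI : Algebra.FiniteType K (MvPolynomial (Fin m ⊕ Fin n) K) :=
    inferInstance
  haveI hFT : Algebra.FiniteType (↥Bprime) (MvPolynomial (Fin m ⊕ Fin n) K) :=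
    Algebra.FiniteType.of_restrictScalars_finiteType
      (R := K) (S := ↥Bprime) (A := MvPolynomial (Fin m ⊕ Fin n) K)
  haveI hMF : Module.Finite (↥Bprime) (MvPolynomial (Fin m ⊕ Fin n) K) :=
    Algebra.IsIntegral.finite
  -- B' is a Noetherian ring
  have hfin : Set.Finite ({f | ∃ i : ℕ, 1 ≤ i ∧ i ≤ m ∧ f = (sigmaX K m n i) ^ p} ∪
      {f | ∃ j : ℕ, 1 ≤ j ∧ j ≤ n ∧ f = (sigmaY K m n j) ^ p} :
        Set (MvPolynomial (Fin m ⊕ Fin n) K)) := by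
    apply Set.Finite.union
    · apply Set.Finite.subset ((Set.finite_Icc 1 m).image fun i => sigmaX K m n i ^ p)
      rintro f ⟨i, h1, h2, rfl⟩
      exact ⟨i, ⟨h1, h2⟩, rfl⟩
    · apply Set.Finite.subset ((Set.finite_Icc 1 n).image fun j => sigmaY K m n j ^ p)
      rintro f ⟨j, h1, h2, rfl⟩
      exact ⟨j, ⟨h1, h2⟩, rfl⟩
  have hBfg : Bprime.FG := Subalgebra.fg_def.2 ⟨_, hfin, hB.symm⟩
  haveI : Algebra.FiniteType K (↥Bprime) := (Subalgebra.fg_iff_finiteType Bprime).1 hBfg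
  haveI : IsNoetherianRing (↥Bprime) := Algebra.FiniteType.isNoetherianRing K (↥Bprime)
  haveI : IsNoetherian (↥Bprime) (MvPolynomial (Fin m ⊕ Fin n) K) :=
    isNoetherian_of_isNoetherianRing_of_finite _ _
  obtain ⟨S, hS⟩ := IsNoetherian.noetherian A_mod
  refine ⟨S, ?_, ?_⟩
  · intro g hg
    have : g ∈ A_mod := hS ▸ Submodule.subset_span hg
    exact this
  · intro f hf
    have hfA : f ∈ A_mod := hf
    rw [← hS] at hfA
    exact hfA

end
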